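/- arXiv:1206.6642 — 2 statements merged into one kernel-verified Lean document; each statement's English description precedes it below -/
import Mathlib

section
/- Let m be a prime and k a positive integer. Then, in the ring ℤ[[q]] of formal power series, ( (∏_{j≥1}(1 − q^j))^m · (∏_{j≥1}(1 − q^{mj}))^{−1} )^{m^{k−1}} ≡ 1 (mod m^k), i.e., every coefficient of positive degree of this power series is divisible by m^k and its constant term is congruent to 1 modulo m^k. -/
open PowerSeries

/-- `eulerProd d` is the formal power series `∏_{j ≥ 1} (1 - q^(d*j))` over `ℤ`:
its `n`-th coefficient agrees with that of any sufficiently long finite partial product. -/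
noncomputable def eulerProd (d : ℕ) : PowerSeries ℤ :=
  PowerSeries.mk fun n =>
    PowerSeries.coeff (R := ℤ) n (∏ j ∈ Finset.range (n + 1), (1 - (PowerSeries.X : PowerSeries ℤ) ^ (d * (j + 1))))

lemma coeff_prod_stable (d n : ℕ) (hd : 0 < d) :
    ∀ N, n + 1 ≤ N →
      PowerSeries.coeff (R := ℤ) n (∏ j ∈ Finset.range N, (1 - (X : PowerSeries ℤ) ^ (d * (j + 1)))) =
      PowerSeries.coeff (R := ℤ) n (∏ j ∈ Finset.range (n + 1), (1 - (X : PowerSeries ℤ) ^ (d * (j + 1)))) := by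
  intro N hN
  induction N with
  | zero => omega
  | succ N ih =>
    rcases Nat.lt_or_ge (n + 1) (N + 1) with h | h
    · have hn : n + 1 ≤ N := by omega
      rw [Finset.prod_range_succ, mul_sub, mul_one, map_sub, coeff_mul_X_pow', if_neg, sub_zero,
        ih hn]
      have : n < d * (N + 1) := by
        calc n < N + 1 := by omega
        _ ≤ d * (N + 1) := Nat.le_mul_of_pos_left _ hd
      omega
    · have : N + 1 = n + 1 := by omega
      rw [this]

lemma X_pow_dvd_sub_eulerProd (d n : ℕ) (hd : 0 < d) :
    (X : PowerSeries ℤ) ^ (n + 1) ∣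
      eulerProd d - ∏ j ∈ Finset.range (n + 1), (1 - (X : PowerSeries ℤ) ^ (d * (j + 1))) := by
  rw [X_pow_dvd_iff]
  intro i hi
  rw [map_sub, sub_eq_zero]
  show (PowerSeries.coeff (R := ℤ) i) (eulerProd d) = _
  rw [eulerProd, coeff_mk]
  exact (coeff_prod_stable d i hd (n + 1) (by omega)).symm

lemma coeff_eq_of_X_pow_dvd (n : ℕ) {f g : PowerSeries ℤ}
    (h : (X : PowerSeries ℤ) ^ (n + 1) ∣ f - g) :
    PowerSeries.coeff (R := ℤ) n f = PowerSeries.coeff (R := ℤ) n g := by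
  rw [X_pow_dvd_iff] at h
  have := h n (by omega)
  rw [map_sub, sub_eq_zero] at this
  exact this

/-- Frobenius congruence: `m ∣` every coefficient of `eulerProd 1 ^ m - eulerProd m`. -/
lemma dvd_coeff_sub (m : ℕ) (hm : m.Prime) (n : ℕ) :
    (m : ℤ) ∣ PowerSeries.coeff (R := ℤ) n (eulerProd 1 ^ m - eulerProd m) := by
  haveI : Fact m.Prime := ⟨hm⟩
  set P1 : PowerSeries ℤ := ∏ j ∈ Finset.range (n + 1), (1 - (X : PowerSeries ℤ) ^ (1 * (j + 1)))
  set Pm : PowerSeries ℤ := ∏ j ∈ Finset.range (n + 1), (1 - (X : PowerSeries ℤ) ^ (m * (j + 1)))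
  have h1 : PowerSeries.coeff (R := ℤ) n (eulerProd 1 ^ m) = PowerSeries.coeff (R := ℤ) n (P1 ^ m) := by
    apply coeff_eq_of_X_pow_dvd
    have := X_pow_dvd_sub_eulerProd 1 n one_pos
    exact this.trans (sub_dvd_pow_sub_pow _ _ m)
  have h2 : PowerSeries.coeff (R := ℤ) n (eulerProd m) = PowerSeries.coeff (R := ℤ) n Pm := by
    rw [eulerProd, coeff_mk]
  rw [map_sub, h1, h2, ← map_sub]
  -- now show m divides each coefficient of P1 ^ m - Pm by mapping to ZMod m
  have hmap : PowerSeries.map (Int.castRingHom (ZMod m)) (P1 ^ m - Pm) = 0 := by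
    haveI : CharP (PowerSeries (ZMod m)) m :=
      charP_of_injective_ringHom (PowerSeries.C_injective (R := ZMod m)) m
    rw [map_sub, map_pow, map_prod, map_prod]
    have : ∀ j ∈ Finset.range (n + 1),
        PowerSeries.map (Int.castRingHom (ZMod m)) (1 - (X : PowerSeries ℤ) ^ (1 * (j + 1))) =
          (1 - (X : PowerSeries (ZMod m)) ^ (j + 1)) := by
      intro j _
      rw [map_sub, map_one, map_pow, PowerSeries.map_X, one_mul]
    rw [Finset.prod_congr rfl this, ← Finset.prod_pow]
    have : ∀ j ∈ Finset.range (n + 1),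
        (1 - (X : PowerSeries (ZMod m)) ^ (j + 1)) ^ m =
        PowerSeries.map (Int.castRingHom (ZMod m)) (1 - (X : PowerSeries ℤ) ^ (m * (j + 1))) := by
      intro j _
      rw [map_sub, map_one, map_pow, PowerSeries.map_X, sub_pow_char, one_pow, ← pow_mul, Nat.mul_comm]
    rw [Finset.prod_congr rfl this, sub_self]
  have := congrArg (PowerSeries.coeff (R := ZMod m) n) hmap
  rw [PowerSeries.coeff_map, map_zero] at this
  exact (ZMod.intCast_zmod_eq_zero_iff_dvd _ m).mp this

lemma C_dvd_of_dvd_coeff (c : ℤ) (f : PowerSeries ℤ)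
    (h : ∀ n, c ∣ PowerSeries.coeff (R := ℤ) n f) : (PowerSeries.C (R := ℤ) c) ∣ f := by
  refine ⟨PowerSeries.mk fun n => (h n).choose, ?_⟩
  ext n
  rw [PowerSeries.coeff_C_mul, coeff_mk]
  exact (h n).choose_spec

theorem eta_quotient_congruent_one (m k : ℕ) (hm : m.Prime) (hk : 0 < k)
    (u : (PowerSeries ℤ)ˣ) (hu : (u : PowerSeries ℤ) = eulerProd m) :
    ∀ n : ℕ, (m : ℤ) ^ k ∣
      PowerSeries.coeff (R := ℤ) n ((eulerProd 1 ^ m * (↑u⁻¹ : PowerSeries ℤ)) ^ m ^ (k - 1) - 1) := by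
  intro n
  have hdvd : (m : PowerSeries ℤ) ∣ eulerProd 1 ^ m * (↑u⁻¹ : PowerSeries ℤ) - 1 := by
    have h1 : (PowerSeries.C (R := ℤ) (m : ℤ)) ∣ eulerProd 1 ^ m - eulerProd m :=
      C_dvd_of_dvd_coeff _ _ fun n => by
        have := dvd_coeff_sub m hm n; exact this
    have key : eulerProd 1 ^ m * (↑u⁻¹ : PowerSeries ℤ) - 1 =
        (eulerProd 1 ^ m - eulerProd m) * (↑u⁻¹ : PowerSeries ℤ) := by
      rw [sub_mul, ← hu]
      congr 1
      rw [Units.mul_inv]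
    rw [key]
    have : (m : PowerSeries ℤ) = PowerSeries.C (R := ℤ) (m : ℤ) := by
      simp
    rw [this]
    exact h1.mul_right _
  have := dvd_sub_pow_of_dvd_sub hdvd (k - 1)
  rw [one_pow] at this
  have hk' : k - 1 + 1 = k := by omega
  rw [hk'] at this
  obtain ⟨g, hg⟩ := this
  have hC : ((m : PowerSeries ℤ)) ^ k = PowerSeries.C (R := ℤ) ((m : ℤ) ^ k) := by simp
  rw [hg, hC, PowerSeries.coeff_C_mul]
  exact Dvd.intro _ rfl
end

section
/- As formal power series over ℤ, (Σ_{n≥0} p_5(5n) q^n) · ∏_{j≥1}(1 − q^j) ≡ (1 + 240·Σ_{n≥1} σ_3(n) q^n)² (mod 5), i.e., every coefficient of the difference of the two sides is divisible by 5, where σ_3(n) = Σ_{d | n} d³. -/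
open PowerSeries

/-- `multipartition r n` is the number of `r`-component multipartitions of `n`,
i.e. the number of `r`-tuples of integer partitions whose sizes sum to `n`. -/
def multipartition (r n : ℕ) : ℕ :=
  ∑ c ∈ Finset.Nat.antidiagonalTuple r n, ∏ i, Fintype.card (Nat.Partition (c i))

/-- The `q`-expansion of the Eisenstein series `E₄`, namely `1 + 240 ∑_{n ≥ 1} σ₃(n) qⁿ`. -/
noncomputable def E4 : PowerSeries ℤ :=
  PowerSeries.mk fun n => if n = 0 then 1 else 240 * ∑ d ∈ n.divisors, (d : ℤ) ^ 3

namespace MultiGF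

noncomputable section

variable {α : Type*}

open Finset

open scoped Classical

/-- A convenience constructor for the power series whose coefficients indicate a subset. -/
def indicatorSeries (α : Type*) [Semiring α] (s : Set ℕ) : PowerSeries α :=
  PowerSeries.mk fun n => if n ∈ s then 1 else 0

theorem coeff_indicator (s : Set ℕ) [Semiring α] (n : ℕ) :
    coeff (R := α) n (indicatorSeries _ s) = if n ∈ s then 1 else 0 :=
  coeff_mk _ _

theorem constantCoeff_indicator (s : Set ℕ) [Semiring α] :
    constantCoeff (R := α) (indicatorSeries _ s) = if 0 ∈ s then 1 else 0 :=
  rfl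

theorem num_series' [Field α] (i : ℕ) :
    (1 - (X : PowerSeries α) ^ (i + 1))⁻¹ = indicatorSeries α {k | i + 1 ∣ k} := by
  rw [PowerSeries.inv_eq_iff_mul_eq_one]
  · ext n
    cases n with
    | zero => simp [mul_sub, zero_pow, constantCoeff_indicator]
    | succ n =>
      simp only [coeff_one, if_false, mul_sub, mul_one, coeff_indicator,
        LinearMap.map_sub, reduceCtorEq]
      simp_rw [coeff_mul, coeff_X_pow, coeff_indicator, @boole_mul _ _ _ _]
      rw [@sum_ite _ _ _ _ _ (fun _ => Classical.propDecidable _), sum_ite]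
      simp_rw [@filter_filter _ _ _ _ _, sum_const_zero, add_zero, sum_const, nsmul_eq_mul, mul_one,
        sub_eq_iff_eq_add, zero_add]
      symm
      split_ifs with h
      · suffices #{a ∈ antidiagonal (n + 1) | i + 1 ∣ a.fst ∧ a.snd = i + 1} = 1 by
          simp only [Set.mem_setOf_eq]; convert congr_arg ((↑) : ℕ → α) this; norm_cast
        rw [card_eq_one]
        cases' h with p hp
        refine ⟨((i + 1) * (p - 1), i + 1), ?_⟩
        ext ⟨a₁, a₂⟩
        simp only [mem_filter, Prod.mk_inj, Finset.HasAntidiagonal.mem_antidiagonal, mem_singleton]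
        constructor
        · rintro ⟨a_left, ⟨a, rfl⟩, rfl⟩
          refine ⟨?_, rfl⟩
          rw [Nat.mul_sub_left_distrib, ← hp, ← a_left, mul_one, Nat.add_sub_cancel]
        · rintro ⟨rfl, rfl⟩
          match p with
          | 0 => rw [mul_zero] at hp; cases hp
          | p + 1 => rw [hp]; simp [mul_add]
      · suffices #{a ∈ antidiagonal (n + 1) | i + 1 ∣ a.fst ∧ a.snd = i + 1} = 0 by
          simp only [Set.mem_setOf_eq]; convert congr_arg ((↑) : ℕ → α) this; norm_cast
        rw [card_eq_zero]
        apply eq_empty_of_forall_notMem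
        simp only [Prod.forall, mem_filter, not_and, Finset.HasAntidiagonal.mem_antidiagonal]
        rintro _ h₁ h₂ ⟨a, rfl⟩ rfl
        apply h
        simp [← h₂]
  · simp [zero_pow]

-- The main workhorse of the partition theorem proof.
theorem partialGF_prop (α : Type*) [CommSemiring α] (n : ℕ) (s : Finset ℕ) (hs : ∀ i ∈ s, 0 < i)
    (c : ℕ → Set ℕ) (hc : ∀ i, i ∉ s → 0 ∈ c i) :
    #{p : n.Partition | (∀ j, p.parts.count j ∈ c j) ∧ ∀ j ∈ p.parts, j ∈ s} =
      coeff (R := α) n (∏ i ∈ s, indicatorSeries α ((· * i) '' c i)) := by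
  simp_rw [coeff_prod, coeff_indicator, prod_boole, sum_boole]
  apply congr_arg
  simp only [mem_univ, forall_true_left, not_and, not_forall, exists_prop,
    Set.mem_image, not_exists]
  set φ : (a : Nat.Partition n) →
    a ∈ filter (fun p ↦ (∀ (j : ℕ), Multiset.count j p.parts ∈ c j) ∧ ∀ j ∈ p.parts, j ∈ s) univ →
    ℕ →₀ ℕ := fun p _ => {
      toFun := fun i => Multiset.count i p.parts • i
      support := Finset.filter (fun i => i ≠ 0) p.parts.toFinset
      mem_support_toFun := fun a => by
        simp only [smul_eq_mul, ne_eq, mul_eq_zero, Multiset.count_eq_zero]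
        rw [not_or, not_not]
        simp only [Multiset.mem_toFinset, not_not, mem_filter] }
  refine Finset.card_bij φ ?_ ?_ ?_
  · intro a ha
    simp only [φ, not_forall, not_exists, not_and, exists_prop, mem_filter]
    rw [mem_finsuppAntidiag]
    dsimp only [ne_eq, smul_eq_mul, id_eq, eq_mpr_eq_cast, le_eq_subset, Finsupp.coe_mk]
    simp only [mem_univ, forall_true_left, not_and, not_forall, exists_prop,
      mem_filter, true_and] at ha
    refine ⟨⟨?_, fun i ↦ ?_⟩, fun i _ ↦ ⟨a.parts.count i, ha.1 i, rfl⟩⟩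
    · conv_rhs => simp [← a.parts_sum]
      rw [sum_multiset_count_of_subset _ s]
      · simp only [smul_eq_mul]
      · intro i
        simp only [Multiset.mem_toFinset, not_not, mem_filter]
        apply ha.2
    · simp only [ne_eq, Multiset.mem_toFinset, not_not, mem_filter, and_imp]
      exact fun hi _ ↦ ha.2 i hi
  · intro p₁ hp₁ p₂ hp₂ h
    apply Nat.Partition.ext
    simp only [true_and, mem_univ, mem_filter] at hp₁ hp₂
    ext i
    simp only [φ, ne_eq, Multiset.mem_toFinset, not_not, smul_eq_mul, Finsupp.mk.injEq] at h
    by_cases hi : i = 0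
    · rw [hi]
      rw [Multiset.count_eq_zero_of_notMem]
      · rw [Multiset.count_eq_zero_of_notMem]
        intro a; exact Nat.lt_irrefl 0 (hs 0 (hp₂.2 0 a))
      intro a; exact Nat.lt_irrefl 0 (hs 0 (hp₁.2 0 a))
    · rw [← mul_left_inj' hi]
      rw [funext_iff] at h
      exact h.2 i
  · simp only [φ, mem_filter, mem_finsuppAntidiag, mem_univ, exists_prop, true_and, and_assoc]
    rintro f ⟨hf, hf₃, hf₄⟩
    have hf' : f ∈ finsuppAntidiag s n := mem_finsuppAntidiag.mpr ⟨hf, hf₃⟩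
    simp only [mem_finsuppAntidiag] at hf'
    refine ⟨⟨∑ i ∈ s, Multiset.replicate (f i / i) i, ?_, ?_⟩, ?_, ?_, ?_⟩
    · intro i hi
      simp only [exists_prop, Multiset.mem_sum, mem_map, Function.Embedding.coeFn_mk] at hi
      rcases hi with ⟨t, ht, z⟩
      apply hs
      rwa [Multiset.eq_of_mem_replicate z]
    · simp_rw [Multiset.sum_sum, Multiset.sum_replicate, Nat.nsmul_eq_mul]
      rw [← hf'.1]
      refine sum_congr rfl fun i hi => Nat.div_mul_cancel ?_
      rcases hf₄ i hi with ⟨w, _, hw₂⟩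
      rw [← hw₂]
      exact dvd_mul_left _ _
    · intro i
      simp_rw [Multiset.count_sum', Multiset.count_replicate, sum_ite_eq']
      split_ifs with h
      · rcases hf₄ i h with ⟨w, hw₁, hw₂⟩
        rwa [← hw₂, Nat.mul_div_cancel _ (hs i h)]
      · exact hc _ h
    · intro i hi
      rw [Multiset.mem_sum] at hi
      rcases hi with ⟨j, hj₁, hj₂⟩
      rwa [Multiset.eq_of_mem_replicate hj₂]
    · ext i
      simp_rw [Multiset.count_sum', Multiset.count_replicate, sum_ite_eq']
      simp only [ne_eq, Multiset.mem_toFinset, not_not, smul_eq_mul, ite_mul,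
        zero_mul, Finsupp.coe_mk]
      split_ifs with h
      · apply Nat.div_mul_cancel
        rcases hf₄ i h with ⟨w, _, hw₂⟩
        apply Dvd.intro_left _ hw₂
      · apply symm
        rw [← Finsupp.notMem_support_iff]
        exact notMem_mono hf'.2 h

/-- If `m` exceeds `k`, the `k`-th coefficient of the partial partition generating function
counts all the partitions of `k`. -/
theorem card_partition_coeff (k m : ℕ) (h : k < m) :
    ((Fintype.card (Nat.Partition k) : ℚ)) =
      coeff (R := ℚ) k (∏ i ∈ Finset.range m, (1 - (X : PowerSeries ℚ) ^ (i + 1))⁻¹) := by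
  have hs : ∀ i ∈ (range m).map ⟨Nat.succ, Nat.succ_injective⟩, 0 < i := by
    simp only [mem_map, Function.Embedding.coeFn_mk]
    rintro i ⟨a, -, rfl⟩
    exact Nat.succ_pos a
  have key := partialGF_prop ℚ k ((range m).map ⟨Nat.succ, Nat.succ_injective⟩) hs
    (fun _ => Set.univ) (fun _ _ => trivial)
  have hfilter : ({p : k.Partition | (∀ j, p.parts.count j ∈ Set.univ) ∧
      ∀ j ∈ p.parts, j ∈ (range m).map ⟨Nat.succ, Nat.succ_injective⟩} : Finset k.Partition)
      = Finset.univ := by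
    apply Finset.filter_true_of_mem
    intro p _
    refine ⟨fun _ => trivial, fun j hj => ?_⟩
    have hj1 : 0 < j := p.parts_pos hj
    have hjk : j ≤ k := by
      simpa [p.parts_sum] using Multiset.single_le_sum (fun _ _ => Nat.zero_le _) _ hj
    simp only [mem_map, Function.Embedding.coeFn_mk, mem_range]
    exact ⟨j - 1, by omega, by omega⟩
  rw [hfilter, card_univ] at key
  rw [key, Finset.prod_map]
  congr 1
  apply Finset.prod_congr rfl
  intro a _
  rw [num_series']
  refine congrArg (indicatorSeries ℚ) ?_
  ext x
  simp only [Set.mem_image, Set.mem_univ, true_and, Function.Embedding.coeFn_mk,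
    Set.mem_setOf_eq]
  constructor
  · rintro ⟨p, rfl⟩
    exact Dvd.intro_left p rfl
  · rintro ⟨c, rfl⟩
    exact ⟨c, (mul_comm _ _)⟩

end

end MultiGF

section Lemmas

open Finset

variable {R : Type*}

/-- The coefficient of a power of a power series, as a sum over `antidiagonalTuple`. -/
theorem coeff_pow_tuple [CommSemiring R] (k n : ℕ) (φ : PowerSeries R) :
    coeff (R := R) n (φ ^ k) = ∑ c ∈ Finset.Nat.antidiagonalTuple k n, ∏ i, coeff (R := R) (c i) φ := by
  classical
  rw [PowerSeries.coeff_pow]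
  refine Finset.sum_nbij' (fun l => fun i : Fin k => l i)
    (fun c => Finsupp.onFinset (Finset.range k) (fun m => if h : m < k then c ⟨m, h⟩ else 0)
      (fun m hm => Finset.mem_range.mpr (by by_contra h; exact hm (dif_neg h))))
    ?_ ?_ ?_ ?_ ?_
  · intro l hl
    rw [mem_finsuppAntidiag] at hl
    rw [Finset.Nat.mem_antidiagonalTuple]
    rw [← hl.1]
    exact Fin.sum_univ_eq_sum_range (fun m => l m) k
  · intro c hc
    rw [Finset.Nat.mem_antidiagonalTuple] at hc
    rw [mem_finsuppAntidiag]
    constructor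
    · rw [Finsupp.coe_onFinset, ← Fin.sum_univ_eq_sum_range, ← hc]
      apply Finset.sum_congr rfl
      intro i _
      simp only [i.isLt, dif_pos, Fin.eta]
    · exact Finsupp.support_onFinset_subset
  · intro l hl
    rw [mem_finsuppAntidiag] at hl
    ext m
    simp only [Finsupp.onFinset_apply]
    by_cases h : m < k
    · rw [dif_pos h]
    · rw [dif_neg h]
      symm
      rw [← Finsupp.notMem_support_iff]
      intro hm
      exact h (Finset.mem_range.mp (hl.2 hm))
  · intro c _
    funext i
    simp only [Finsupp.onFinset_apply, i.isLt, dif_pos, Fin.eta]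
  · intro l _
    exact (Fin.prod_univ_eq_prod_range (fun m => coeff (R := R) (l m) φ) k).symm

/-- The generating function of `r`-multipartitions is the `r`-th power of the partition
generating function. -/
theorem mk_multipartition_eq_pow [CommSemiring R] (r : ℕ) :
    (PowerSeries.mk fun n => (multipartition r n : R)) =
      (PowerSeries.mk fun n => (Fintype.card (Nat.Partition n) : R)) ^ r := by
  ext n
  rw [coeff_mk, coeff_pow_tuple, multipartition]
  push_cast
  apply Finset.sum_congr rfl
  intro c _
  apply Finset.prod_congr rfl
  intro i _
  rw [coeff_mk]

theorem coeff_X_pow_mul_of_lt [CommSemiring R] {l c : ℕ} (h : l < c) (ψ : PowerSeries R) :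
    coeff (R := R) l ((X : PowerSeries R) ^ c * ψ) = 0 := by
  rw [coeff_mul]
  apply Finset.sum_eq_zero
  rintro ⟨a, b⟩ hab
  rw [Finset.HasAntidiagonal.mem_antidiagonal] at hab
  rw [coeff_X_pow, if_neg (by omega), zero_mul]

theorem euler_tail [CommRing R] (m : ℕ) (d : ℕ) : ∃ h : PowerSeries R,
    ∏ i ∈ Finset.range d, (1 - (X : PowerSeries R) ^ (m + i + 1)) = 1 + X ^ (m + 1) * h := by
  induction d with
  | zero => exact ⟨0, by simp⟩
  | succ d ih =>
    obtain ⟨h, hh⟩ := ih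
    refine ⟨h - X ^ d * (1 + X ^ (m + 1) * h), ?_⟩
    rw [Finset.prod_range_succ, hh]
    have : (X : PowerSeries R) ^ (m + d + 1) = X ^ (m + 1) * X ^ d := by
      rw [← pow_add]; ring_nf
    rw [this]
    ring

theorem euler_coeff_stable [CommRing R] {l m₁ m₂ : ℕ} (h1 : l < m₁) (h2 : m₁ ≤ m₂) :
    coeff (R := R) l (∏ j ∈ Finset.range m₂, (1 - (X : PowerSeries R) ^ (j + 1))) =
      coeff (R := R) l (∏ j ∈ Finset.range m₁, (1 - (X : PowerSeries R) ^ (j + 1))) := by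
  obtain ⟨d, rfl⟩ := Nat.exists_eq_add_of_le h2
  rw [Finset.prod_range_add]
  obtain ⟨h, hh⟩ := euler_tail (R := R) m₁ d
  rw [hh, mul_add, mul_one, map_add]
  have : (∏ j ∈ Finset.range m₁, (1 - (X : PowerSeries R) ^ (j + 1))) * (X ^ (m₁ + 1) * h)
      = X ^ (m₁ + 1) * ((∏ j ∈ Finset.range m₁, (1 - (X : PowerSeries R) ^ (j + 1))) * h) := by
    ring
  rw [this, coeff_X_pow_mul_of_lt (by omega), add_zero]

/-- Mapping `eulerProd 1` into any ring gives the euler partial products coefficientwise. -/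
theorem coeff_eulerProd_map [CommRing R] (l : ℕ) :
    ((coeff (R := ℤ) l (eulerProd 1) : ℤ) : R) =
      coeff (R := R) l (∏ j ∈ Finset.range (l + 1), (1 - (X : PowerSeries R) ^ (j + 1))) := by
  show (Int.castRingHom R) (coeff (R := ℤ) l (eulerProd 1)) = _
  rw [eulerProd, coeff_mk, ← PowerSeries.coeff_map]
  congr 1
  rw [map_prod]
  apply Finset.prod_congr rfl
  intro j _
  rw [map_sub, map_one, map_pow, PowerSeries.map_X, one_mul]

/-- The key identity: the partition generating function is inverse to the Euler product. -/
theorem partition_mul_euler (n : ℕ) :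
    coeff (R := ℤ) n ((PowerSeries.mk fun j => (Fintype.card (Nat.Partition j) : ℤ)) * eulerProd 1) =
      if n = 0 then 1 else 0 := by
  have key : coeff (R := ℚ) n ((PowerSeries.mk fun j => (Fintype.card (Nat.Partition j) : ℚ)) *
      (PowerSeries.mk fun j => ((coeff (R := ℤ) j (eulerProd 1) : ℤ) : ℚ))) =
      if n = 0 then 1 else 0 := by
    set m := n + 1 with hm
    set A : PowerSeries ℚ := ∏ i ∈ Finset.range m, (1 - (X : PowerSeries ℚ) ^ (i + 1))⁻¹ with hA
    set B : PowerSeries ℚ := ∏ i ∈ Finset.range m, (1 - (X : PowerSeries ℚ) ^ (i + 1)) with hB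
    have hAB : A * B = 1 := by
      rw [hA, hB, ← Finset.prod_mul_distrib]
      apply Finset.prod_eq_one
      intro i _
      apply PowerSeries.inv_mul_cancel
      simp [zero_pow]
    have : coeff (R := ℚ) n ((PowerSeries.mk fun j => (Fintype.card (Nat.Partition j) : ℚ)) *
        (PowerSeries.mk fun j => ((coeff (R := ℤ) j (eulerProd 1) : ℤ) : ℚ))) = coeff (R := ℚ) n (A * B) := by
      rw [coeff_mul, coeff_mul]
      apply Finset.sum_congr rfl
      rintro ⟨k, l⟩ hkl
      rw [Finset.HasAntidiagonal.mem_antidiagonal] at hkl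
      rw [coeff_mk, coeff_mk]
      congr 1
      · exact MultiGF.card_partition_coeff k m (by omega)
      · rw [coeff_eulerProd_map l, hB]
        exact (euler_coeff_stable (by omega) (by omega)).symm
    rw [this, hAB, PowerSeries.coeff_one]
  -- transfer the identity from ℚ to ℤ
  have : ((coeff (R := ℤ) n ((PowerSeries.mk fun j => (Fintype.card (Nat.Partition j) : ℤ)) *
      eulerProd 1) : ℤ) : ℚ) = ((if n = 0 then 1 else 0 : ℤ) : ℚ) := by
    rw [coeff_mul] at key ⊢
    push_cast
    rw [← key]
    apply Finset.sum_congr rfl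
    rintro ⟨k, l⟩ _
    simp only [coeff_mk]
    norm_cast
  exact_mod_cast this

instance : Fact (Nat.Prime 5) := ⟨by norm_num⟩

/-- Frobenius for power series over `ZMod 5`. -/
theorem coeff_pow_five (f : PowerSeries (ZMod 5)) (j : ℕ) :
    coeff (R := (ZMod 5)) (5 * j) (f ^ 5) = coeff (R := (ZMod 5)) j f := by
  set n := 5 * j with hn
  set Q := trunc (n + 1) f with hQ
  have h1 : coeff (R := (ZMod 5)) n (f ^ 5) = (trunc (n + 1) (f ^ 5)).coeff n := by
    rw [coeff_trunc, if_pos (by omega)]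
  have h2 : trunc (n + 1) (f ^ 5) = trunc (n + 1) (((Q : PowerSeries (ZMod 5))) ^ 5) :=
    (trunc_trunc_pow f (n + 1) 5).symm
  have h3 : ((Q : PowerSeries (ZMod 5)) ^ 5) = ((Q ^ 5 : Polynomial (ZMod 5)) : PowerSeries (ZMod 5)) := by
    rw [Polynomial.coe_pow]
  have h4 : (Q ^ 5 : Polynomial (ZMod 5)) = Polynomial.expand (ZMod 5) 5 Q := by
    rw [← Polynomial.map_frobenius_expand (p := 5) Q, ZMod.frobenius_zmod, Polynomial.map_id]
  rw [h1, h2, h3, coeff_trunc, if_pos (by omega), Polynomial.coeff_coe, h4,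
    Polynomial.coeff_expand (by norm_num : 0 < 5), hn, if_pos (Dvd.intro j rfl),
    Nat.mul_div_cancel_left j (by norm_num), hQ, coeff_trunc, if_pos (by omega)]

end Lemmas

set_option maxHeartbeats 1000000 in
theorem multipartition_five_five_gf (n : ℕ) :
    (5 : ℤ) ∣ PowerSeries.coeff (R := ℤ) n
      ((PowerSeries.mk fun j => (multipartition 5 (5 * j) : ℤ)) * eulerProd 1 - E4 ^ 2) := by
  set A : PowerSeries ℤ := PowerSeries.mk fun j => (multipartition 5 (5 * j) : ℤ) with hA
  -- Part 2 : `E4 ^ 2 ≡ 1 [MOD 5]` coefficientwise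
  set D : PowerSeries ℤ :=
    PowerSeries.mk fun m => if m = 0 then 0 else 48 * ∑ d ∈ m.divisors, (d : ℤ) ^ 3 with hD
  have hE : E4 = 1 + (PowerSeries.C (R := ℤ) 5) * D := by
    ext m
    rw [E4, coeff_mk, map_add, PowerSeries.coeff_one, PowerSeries.coeff_C_mul, hD, coeff_mk]
    by_cases h : m = 0
    · simp [h]
    · simp only [h, if_false]
      ring
  have part2 : (5 : ℤ) ∣ PowerSeries.coeff (R := ℤ) n (E4 ^ 2 - 1) := by
    have h2 : E4 ^ 2 - 1 = PowerSeries.C (R := ℤ) 5 * (2 * D + PowerSeries.C (R := ℤ) 5 * D ^ 2) := by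
      rw [hE]; ring
    rw [h2, PowerSeries.coeff_C_mul]
    exact Dvd.intro _ rfl
  -- Part 1 : `A * eulerProd 1 ≡ 1 [MOD 5]` coefficientwise
  have part1 : (5 : ℤ) ∣ PowerSeries.coeff (R := ℤ) n (A * eulerProd 1 - 1) := by
    rw [show (5 : ℤ) = ((5 : ℕ) : ℤ) by norm_num, ← ZMod.intCast_zmod_eq_zero_iff_dvd]
    have hc : ((PowerSeries.coeff (R := ℤ) n (A * eulerProd 1 - 1) : ℤ) : ZMod 5) =
        PowerSeries.coeff (R := (ZMod 5)) n
          (PowerSeries.map (Int.castRingHom (ZMod 5)) (A * eulerProd 1 - 1)) :=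
      (PowerSeries.coeff_map (Int.castRingHom (ZMod 5)) n (A * eulerProd 1 - 1)).symm
    rw [hc, map_sub, map_mul, map_one]
    set P5 : PowerSeries (ZMod 5) :=
      PowerSeries.mk fun m => (Fintype.card (Nat.Partition m) : ZMod 5) with hP5
    have hMA : PowerSeries.map (Int.castRingHom (ZMod 5)) A = P5 := by
      ext j
      rw [PowerSeries.coeff_map, hA, coeff_mk]
      have h1 : (Int.castRingHom (ZMod 5)) ((multipartition 5 (5 * j) : ℕ) : ℤ) =
          ((multipartition 5 (5 * j) : ℕ) : ZMod 5) := by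
        push_cast; rfl
      rw [h1]
      have h2 : ((multipartition 5 (5 * j) : ℕ) : ZMod 5) = PowerSeries.coeff (R := (ZMod 5)) (5 * j)
          (PowerSeries.mk fun m => (multipartition 5 m : ZMod 5)) :=
        (coeff_mk (5 * j) (fun m => ((multipartition 5 m : ℕ) : ZMod 5))).symm
      rw [h2, mk_multipartition_eq_pow 5, coeff_pow_five, hP5, coeff_mk]
    have hPE : PowerSeries.coeff (R := (ZMod 5)) n
        (P5 * PowerSeries.map (Int.castRingHom (ZMod 5)) (eulerProd 1)) =
        if n = 0 then 1 else 0 := by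
      have hmap : PowerSeries.map (Int.castRingHom (ZMod 5))
          ((PowerSeries.mk fun j => (Fintype.card (Nat.Partition j) : ℤ)) * eulerProd 1) =
          P5 * PowerSeries.map (Int.castRingHom (ZMod 5)) (eulerProd 1) := by
        rw [map_mul]
        have hmp : PowerSeries.map (Int.castRingHom (ZMod 5))
            (PowerSeries.mk fun j => (Fintype.card (Nat.Partition j) : ℤ)) = P5 := by
          ext m
          rw [PowerSeries.coeff_map, coeff_mk, hP5, coeff_mk]
          push_cast
          try rfl
        rw [hmp]
      rw [← hmap, PowerSeries.coeff_map, partition_mul_euler, apply_ite (Int.castRingHom (ZMod 5)),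
        map_one, map_zero]
    rw [hMA, map_sub, hPE, PowerSeries.coeff_one]
    split_ifs <;> ring
  have hsplit : A * eulerProd 1 - E4 ^ 2 = (A * eulerProd 1 - 1) - (E4 ^ 2 - 1) := by ring
  rw [hsplit, map_sub]
  exact dvd_sub part1 part2
end
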